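/- The suspension ΣK of a finite simplicial complex K is strongly collapsible if and only if K is strongly collapsible. -/

import Mathlib

open Finset

/-- A finite abstract simplicial complex on vertex type `V`. -/
structure SC (V : Type*) [DecidableEq V] where
  faces : Finset (Finset V)
  nonempty_of_mem : ∀ σ ∈ faces, σ.Nonempty
  down_closed : ∀ σ ∈ faces, ∀ τ ⊆ σ, τ.Nonempty → τ ∈ faces

variable {V : Type*} [DecidableEq V] {W : Type*} [DecidableEq W]

def SC.IsVertex (K : SC V) (v : V) : Prop := ({v} : Finset V) ∈ K.faces

def SC.IsMaximal (K : SC V) (σ : Finset V) : Prop :=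
  σ ∈ K.faces ∧ ∀ τ ∈ K.faces, σ ⊆ τ → σ = τ

/-- `K.Dominated v w` : the vertex `v` is dominated by the vertex `w ≠ v`,
i.e. every maximal simplex containing `v` also contains `w`. -/
def SC.Dominated (K : SC V) (v w : V) : Prop :=
  v ≠ w ∧ K.IsVertex v ∧ K.IsVertex w ∧ ∀ σ, K.IsMaximal σ → v ∈ σ → w ∈ σ

/-- Deletion of a vertex: the subcomplex of simplices not containing `v`. -/
def SC.delete (K : SC V) (v : V) : SC V where
  faces := K.faces.filter (fun σ => v ∉ σ)
  nonempty_of_mem σ hσ := K.nonempty_of_mem σ (mem_filter.mp hσ).1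
  down_closed σ hσ τ hτ hne := by
    rw [mem_filter] at hσ ⊢
    exact ⟨K.down_closed σ hσ.1 τ hτ hne, fun hv => hσ.2 (hτ hv)⟩

/-- An elementary strong collapse: deletion of a dominated vertex. -/
def CollapseStep (K L : SC V) : Prop := ∃ v w, K.Dominated v w ∧ L = K.delete v

/-- `Collapses K L` : `K` strongly collapses to `L`. -/
def Collapses (K L : SC V) : Prop := Relation.ReflTransGen CollapseStep K L

def SC.Minimal (K : SC V) : Prop := ∀ v w, ¬ K.Dominated v w

def StronglyCollapsible (K : SC V) : Prop :=
  ∃ (L : SC V) (v : V), Collapses K L ∧ L.faces = {({v} : Finset V)}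

def IsCore (K M : SC V) : Prop := Collapses K M ∧ M.Minimal

/-- Union of two complexes on the same vertex type. -/
def SC.union (K L : SC V) : SC V where
  faces := K.faces ∪ L.faces
  nonempty_of_mem σ h := (mem_union.mp h).elim (K.nonempty_of_mem σ) (L.nonempty_of_mem σ)
  down_closed σ h τ hτ hne := mem_union.mpr <| (mem_union.mp h).elim
    (fun h => Or.inl (K.down_closed σ h τ hτ hne))
    (fun h => Or.inr (L.down_closed σ h τ hτ hne))

/-- Isomorphism of simplicial complexes on the same vertex type. -/
def Isom (K L : SC V) : Prop :=
  ∃ e : V ≃ V, ∀ σ : Finset V, σ ∈ K.faces ↔ σ.image e ∈ L.faces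

def SC.star (K : SC V) (a : V) : Finset (Finset V) := K.faces.filter (fun σ => a ∈ σ)

def SC.link (K : SC V) (v : V) : Finset (Finset V) :=
  K.faces.filter (fun τ => v ∉ τ ∧ insert v τ ∈ K.faces)


section Aux
variable {K L : SC V} {σ τ : Finset V} {v w u x : V}

theorem SC.ext' {K L : SC V} (h : K.faces = L.faces) : K = L := by
  cases K; cases L; simp_all

theorem SC.mem_delete {σ : Finset V} : σ ∈ (K.delete v).faces ↔ σ ∈ K.faces ∧ v ∉ σ :=
  mem_filter

theorem SC.exists_maximal_supset (K : SC V) (hσ : σ ∈ K.faces) :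
    ∃ τ, K.IsMaximal τ ∧ σ ⊆ τ := by
  obtain ⟨m, hm, hmax⟩ : ∃ m ∈ K.faces.filter (fun τ => σ ⊆ τ),
      ∀ x ∈ K.faces.filter (fun τ => σ ⊆ τ), ¬ m < x := by
    obtain ⟨m, hm⟩ := Finset.exists_maximal (s := K.faces.filter (fun τ => σ ⊆ τ))
      ⟨σ, mem_filter.mpr ⟨hσ, subset_rfl⟩⟩
    exact ⟨m, hm.1, fun x hx hlt => hlt.not_ge (hm.2 hx hlt.le)⟩
  rw [mem_filter] at hm
  refine ⟨m, ⟨hm.1, fun τ hτ hsub => ?_⟩, hm.2⟩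
  by_contra hne
  exact hmax τ (mem_filter.mpr ⟨hτ, hm.2.trans hsub⟩) (lt_of_le_of_ne hsub hne)

theorem SC.dom_insert (h : K.Dominated v w) (hσ : σ ∈ K.faces) (hv : v ∈ σ) :
    insert w σ ∈ K.faces := by
  obtain ⟨τ, hτ, hsub⟩ := K.exists_maximal_supset hσ
  have hw : w ∈ τ := h.2.2.2 τ hτ (hsub hv)
  exact K.down_closed τ hτ.1 _ (insert_subset hw hsub) (insert_nonempty _ _)

theorem SC.delete_maximal (h : (K.delete u).IsMaximal σ) :
    ∃ τ, K.IsMaximal τ ∧ σ = τ.erase u := by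
  have hσ := SC.mem_delete.mp h.1
  obtain ⟨τ, hτ, hsub⟩ := K.exists_maximal_supset hσ.1
  have hne : (τ.erase u).Nonempty := by
    obtain ⟨a, ha⟩ := K.nonempty_of_mem σ hσ.1
    exact ⟨a, mem_erase.mpr ⟨fun h' => hσ.2 (h' ▸ ha), hsub ha⟩⟩
  have hmem : τ.erase u ∈ (K.delete u).faces :=
    SC.mem_delete.mpr ⟨K.down_closed τ hτ.1 _ (erase_subset _ _) hne, notMem_erase _ _⟩
  have hsub2 : σ ⊆ τ.erase u := fun a ha =>
    mem_erase.mpr ⟨fun h' => hσ.2 (h' ▸ ha), hsub ha⟩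
  exact ⟨τ, hτ, h.2 _ hmem hsub2⟩

theorem SC.claimA (huv : v ≠ u) (hwu : w ≠ u) (h : K.Dominated v w) :
    (K.delete u).Dominated v w := by
  refine ⟨h.1, SC.mem_delete.mpr ⟨h.2.1, by simp [Ne.symm huv]⟩,
    SC.mem_delete.mpr ⟨h.2.2.1, by simp [Ne.symm hwu]⟩, fun σ hσ hv => ?_⟩
  obtain ⟨τ, hτ, rfl⟩ := SC.delete_maximal hσ
  have hw : w ∈ τ := h.2.2.2 τ hτ (mem_of_mem_erase hv)
  exact mem_erase.mpr ⟨hwu, hw⟩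

theorem SC.claimB (h1 : K.Dominated v u) (h2 : K.Dominated u x) (hxv : x ≠ v) :
    (K.delete u).Dominated v x := by
  have hvu : v ≠ u := h1.1
  have hux : u ≠ x := h2.1
  refine ⟨Ne.symm hxv, SC.mem_delete.mpr ⟨h1.2.1, by simp [Ne.symm hvu]⟩,
    SC.mem_delete.mpr ⟨h2.2.2.1, by simp [hux]⟩, fun σ hσ hv => ?_⟩
  obtain ⟨τ, hτ, rfl⟩ := SC.delete_maximal hσ
  have hu : u ∈ τ := h1.2.2.2 τ hτ (mem_of_mem_erase hv)
  have hx : x ∈ τ := h2.2.2.2 τ hτ hu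
  exact mem_erase.mpr ⟨fun hh => hux hh.symm, hx⟩

theorem SC.delete_comm : (K.delete u).delete v = (K.delete v).delete u := by
  apply SC.ext'
  ext σ
  simp [SC.delete, mem_filter]; tauto

end Aux
section Iso
variable {K L : SC V} {σ τ : Finset V} {v w u x : V} {e : V ≃ V}

/-- `K` and `L` are isomorphic via `e`. -/
def IsoVia (e : V ≃ V) (K L : SC V) : Prop :=
  ∀ σ : Finset V, σ ∈ K.faces ↔ σ.image e ∈ L.faces

theorem image_symm_image (e : V ≃ V) (σ : Finset V) : (σ.image e).image e.symm = σ := by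
  rw [image_image]; simp

theorem image_image_symm (e : V ≃ V) (σ : Finset V) : (σ.image e.symm).image e = σ := by
  rw [image_image]; simp

theorem IsoVia.symm (h : IsoVia e K L) : IsoVia e.symm L K := by
  intro σ
  constructor
  · intro hσ
    rw [h (σ.image e.symm), image_image_symm]; exact hσ
  · intro hσ
    have := (h _).mp hσ
    rwa [image_image_symm] at this

theorem IsoVia.maximal (h : IsoVia e K L) (hm : K.IsMaximal σ) : L.IsMaximal (σ.image e) := by
  refine ⟨(h σ).mp hm.1, fun ρ hρ hsub => ?_⟩
  have hρ' : ρ.image e.symm ∈ K.faces := by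
    rw [h (ρ.image e.symm), image_image_symm]; exact hρ
  have hsub' : σ ⊆ ρ.image e.symm := by
    intro a ha
    exact mem_image.mpr ⟨e a, hsub (mem_image_of_mem e ha), e.symm_apply_apply a⟩
  have := hm.2 _ hρ' hsub'
  rw [this, image_image_symm]

theorem IsoVia.dominated (h : IsoVia e K L) (hd : K.Dominated v w) :
    L.Dominated (e v) (e w) := by
  refine ⟨fun hh => hd.1 (e.injective hh), ?_, ?_, fun σ hσ hv => ?_⟩
  · have := (h {v}).mp hd.2.1; simpa [SC.IsVertex] using this
  · have := (h {w}).mp hd.2.2.1; simpa [SC.IsVertex] using this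
  · have hm : K.IsMaximal (σ.image e.symm) := h.symm.maximal hσ
    have hv' : v ∈ σ.image e.symm := by
      exact mem_image.mpr ⟨e v, hv, e.symm_apply_apply v⟩
    have hw := hd.2.2.2 _ hm hv'
    obtain ⟨a, ha, hae⟩ := mem_image.mp hw
    have : a = e w := by rw [← hae]; simp
    exact this ▸ ha

theorem IsoVia.delete (h : IsoVia e K L) (v : V) :
    IsoVia e (K.delete v) (L.delete (e v)) := by
  intro σ
  rw [SC.mem_delete, SC.mem_delete, h σ]
  have : e v ∈ σ.image e ↔ v ∈ σ := by
    constructor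
    · intro hh; obtain ⟨a, ha, hae⟩ := mem_image.mp hh; exact e.injective hae ▸ ha
    · exact fun hh => mem_image_of_mem e hh
  tauto

theorem IsoVia.collapses (h : IsoVia e K L) {M : SC V} (hc : Collapses K M) :
    ∃ N, Collapses L N ∧ IsoVia e M N := by
  induction hc with
  | refl => exact ⟨L, Relation.ReflTransGen.refl, h⟩
  | tail _ hstep ih =>
    obtain ⟨N', hcN, hiso⟩ := ih
    obtain ⟨v, w, hd, rfl⟩ := hstep
    exact ⟨N'.delete (e v), hcN.tail ⟨e v, e w, hiso.dominated hd, rfl⟩, hiso.delete v⟩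

theorem IsoVia.strcol (h : IsoVia e K L) (hs : StronglyCollapsible K) :
    StronglyCollapsible L := by
  obtain ⟨M, v₀, hc, hM⟩ := hs
  obtain ⟨N, hcN, hiso⟩ := h.collapses hc
  refine ⟨N, e v₀, hcN, ?_⟩
  ext σ
  rw [mem_singleton, ← image_image_symm e σ]
  constructor
  · intro hσ
    have : σ.image e.symm ∈ M.faces := by
      rw [hiso (σ.image e.symm), image_image_symm]
      rwa [image_image_symm] at hσ
    rw [hM, mem_singleton] at this
    rw [this]; simp
  · intro hh
    have : σ.image e.symm = {v₀} := by
      apply Finset.image_injective e.injective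
      rw [hh]; simp
    rw [this]
    exact (hiso {v₀}).mp (by rw [hM]; simp)
end Iso
section Confluence
variable {K L : SC V} {σ τ : Finset V} {v w u x : V}

theorem swap_image_of_not_mem (hu : u ∉ σ) (hv : v ∉ σ) :
    σ.image (Equiv.swap u v) = σ := by
  have : ∀ b ∈ σ, Equiv.swap u v b = id b := fun b hb =>
    Equiv.swap_apply_of_ne_of_ne (fun h => hu (h ▸ hb)) (fun h => hv (h ▸ hb))
  rw [image_congr this, image_id]

theorem swap_image_of_mem (hu : u ∈ σ) (hv : v ∉ σ) :
    σ.image (Equiv.swap u v) = insert v (σ.erase u) := by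
  conv_lhs => rw [← insert_erase hu]
  rw [image_insert, Equiv.swap_apply_left]
  congr 1
  exact swap_image_of_not_mem (notMem_erase _ _) (fun h => hv (mem_of_mem_erase h))

theorem swap_mem_delete (h1 : K.Dominated u v) (hσ : σ ∈ (K.delete v).faces) :
    σ.image (Equiv.swap u v) ∈ (K.delete u).faces := by
  rw [SC.mem_delete] at hσ ⊢
  by_cases hu : u ∈ σ
  · rw [swap_image_of_mem hu hσ.2]
    have h2 : insert v σ ∈ K.faces := SC.dom_insert h1 hσ.1 hu
    refine ⟨K.down_closed _ h2 _ ?_ (insert_nonempty _ _), ?_⟩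
    · exact insert_subset_insert _ (erase_subset _ _)
    · simp [h1.1, notMem_erase]
  · rw [swap_image_of_not_mem hu hσ.2]
    exact ⟨hσ.1, hu⟩

theorem swap_isoVia (h1 : K.Dominated u v) (h2 : K.Dominated v u) :
    IsoVia (Equiv.swap u v) (K.delete v) (K.delete u) := by
  intro σ
  constructor
  · exact swap_mem_delete h1
  · intro hσ
    have := swap_mem_delete h2 hσ
    rwa [image_image, show ⇑(Equiv.swap v u) ∘ ⇑(Equiv.swap u v) = id by
      ext a; simp [Equiv.swap_comm v u], image_id] at this
  
theorem delete_card_lt (hv : K.IsVertex v) : (K.delete v).faces.card < K.faces.card := by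
  apply card_lt_card
  constructor
  · exact filter_subset _ _
  · intro hsub
    have := hsub hv
    rw [SC.mem_delete] at this
    simp at this

theorem point_minimal {v₀ : V} (hL : K.faces = {({v₀} : Finset V)}) : K.Minimal := by
  intro v w hd
  have h1 : ({v} : Finset V) ∈ K.faces := hd.2.1
  have h2 : ({w} : Finset V) ∈ K.faces := hd.2.2.1
  rw [hL, mem_singleton] at h1 h2
  exact hd.1 (by
    have := h1.trans h2.symm
    exact Finset.singleton_injective this)

theorem step_preserves : ∀ n (K : SC V), K.faces.card ≤ n → StronglyCollapsible K →
    ∀ K', CollapseStep K K' → StronglyCollapsible K' := by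
  intro n
  induction n with
  | zero =>
    intro K hcard hs K' hstep
    obtain ⟨u, x, hd, rfl⟩ := hstep
    have : ({u} : Finset V) ∈ K.faces := hd.2.1
    have := card_pos.mpr ⟨_, this⟩
    omega
  | succ n ih =>
    intro K hcard hs K' hstep
    obtain ⟨L, v₀, hc, hL⟩ := hs
    obtain ⟨u, x, hdu, rfl⟩ := hstep
    rcases (Relation.ReflTransGen.cases_head hc) with heq | ⟨K₁, hstep1, hc1⟩
    · exact absurd hdu (heq ▸ point_minimal hL u x)
    · obtain ⟨v, w, hdv, rfl⟩ := hstep1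
      by_cases huv : u = v
      · exact ⟨L, v₀, huv ▸ hc1, hL⟩
      · have hK1s : StronglyCollapsible (K.delete v) := ⟨L, v₀, hc1, hL⟩
        have hcardv : (K.delete v).faces.card ≤ n := by
          have := delete_card_lt (K := K) hdv.2.1
          omega
        by_cases hmut : w = u ∧ x = v
        · -- mutual domination: use the swap isomorphism
          obtain ⟨rfl, rfl⟩ := hmut
          exact (swap_isoVia hdu hdv).strcol hK1s
        · -- find replacement dominating vertices
          have key : ∃ w' x', (K.delete u).Dominated v w' ∧ (K.delete v).Dominated u x' := by
            by_cases hwu : w = u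
            · subst hwu
              have hxv : x ≠ v := fun h => hmut ⟨rfl, h⟩
              exact ⟨x, x, SC.claimB hdv hdu hxv, SC.claimA huv hxv hdu⟩
            · by_cases hxv : x = v
              · subst hxv
                exact ⟨w, w, SC.claimA (fun h => huv h.symm) hwu hdv,
                  SC.claimB hdu hdv hwu⟩
              · exact ⟨w, x, SC.claimA (fun h => huv h.symm) hwu hdv,
                  SC.claimA huv hxv hdu⟩
          obtain ⟨w', x', hA, hB⟩ := key
          have hstep2 : CollapseStep (K.delete v) ((K.delete v).delete u) := ⟨u, x', hB, rfl⟩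
          have := ih (K.delete v) hcardv hK1s _ hstep2
          rw [show (K.delete v).delete u = (K.delete u).delete v from SC.delete_comm] at this
          obtain ⟨L', y, hc', hL'⟩ := this
          exact ⟨L', y, Relation.ReflTransGen.head ⟨v, w', hA, rfl⟩ hc', hL'⟩

theorem collapses_preserves {K L : SC V} (hs : StronglyCollapsible K) (hc : Collapses K L) :
    StronglyCollapsible L := by
  induction hc with
  | refl => exact hs
  | tail hc' hstep ih => exact step_preserves _ _ le_rfl ih _ hstep

theorem exists_core (K : SC V) : ∃ M, Collapses K M ∧ M.Minimal := by
  generalize hn : K.faces.card = n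
  induction n using Nat.strong_induction_on generalizing K with
  | _ n ih =>
    by_cases hmin : K.Minimal
    · exact ⟨K, Relation.ReflTransGen.refl, hmin⟩
    · simp only [SC.Minimal, not_forall, not_not] at hmin
      obtain ⟨v, w, hd⟩ := hmin
      have hlt : (K.delete v).faces.card < n := hn ▸ delete_card_lt hd.2.1
      obtain ⟨M, hc, hM⟩ := ih _ hlt (K.delete v) rfl
      exact ⟨M, Relation.ReflTransGen.head ⟨v, w, hd, rfl⟩ hc, hM⟩

theorem minimal_strcol {K : SC V} (hmin : K.Minimal) (hs : StronglyCollapsible K) :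
    ∃ v, K.faces = {({v} : Finset V)} := by
  obtain ⟨L, v₀, hc, hL⟩ := hs
  rcases Relation.ReflTransGen.cases_head hc with heq | ⟨K₁, hstep, _⟩
  · exact ⟨v₀, heq ▸ hL⟩
  · obtain ⟨v, w, hd, _⟩ := hstep
    exact absurd hd (hmin v w)

end Confluence
section Susp
variable {K L : SC V} {J : SC (V ⊕ Bool)} {τ ρ : Finset V} {v w : V} {b : Bool}

/-- `J` is the suspension of `K`. -/
def Susp (K : SC V) (J : SC (V ⊕ Bool)) : Prop :=
  ∀ σ : Finset (V ⊕ Bool), σ ∈ J.faces ↔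
      ((∃ τ ∈ K.faces, σ = τ.image Sum.inl) ∨
        (∃ b : Bool, σ = {(Sum.inr b : V ⊕ Bool)}) ∨
        ∃ τ ∈ K.faces, ∃ b : Bool, σ = insert (Sum.inr b) (τ.image Sum.inl))

theorem inr_not_mem_image_inl : (Sum.inr b : V ⊕ Bool) ∉ τ.image Sum.inl := by simp

theorem image_inl_inj (h : τ.image (Sum.inl : V → V ⊕ Bool) = ρ.image Sum.inl) : τ = ρ :=
  Finset.image_injective Sum.inl_injective h

theorem insert_inr_inj
    (h : (insert (Sum.inr b) (τ.image Sum.inl) : Finset (V ⊕ Bool)) =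
      (insert (Sum.inr b) (ρ.image Sum.inl) : Finset (V ⊕ Bool))) :
    τ = ρ := by
  have := congrArg (fun s => Finset.erase s (Sum.inr b)) h
  simp only [erase_insert inr_not_mem_image_inl] at this
  exact image_inl_inj this

theorem Susp.vertex_inl (h : Susp K J) (hv : ({Sum.inl v} : Finset (V ⊕ Bool)) ∈ J.faces) :
    ({v} : Finset V) ∈ K.faces := by
  rcases (h _).mp hv with ⟨τ, hτ, hh⟩ | ⟨b, hh⟩ | ⟨τ, hτ, b, hh⟩
  · have : τ = {v} := image_inl_inj (by rw [← hh]; simp)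
    exact this ▸ hτ
  · simp at hh
  · have : Sum.inr b ∈ ({Sum.inl v} : Finset (V ⊕ Bool)) := hh ▸ mem_insert_self _ _
    simp at this

theorem Susp.insert_mem (h : Susp K J) (hτ : τ ∈ K.faces) (b : Bool) :
    insert (Sum.inr b) (τ.image Sum.inl) ∈ J.faces :=
  (h _).mpr (Or.inr (Or.inr ⟨τ, hτ, b, rfl⟩))

theorem Susp.max_insert (h : Susp K J) (hτ : K.IsMaximal τ) (b : Bool) :
    J.IsMaximal (insert (Sum.inr b) (τ.image Sum.inl)) := by
  refine ⟨h.insert_mem hτ.1 b, fun ρ' hρ' hsub => ?_⟩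
  rcases (h _).mp hρ' with ⟨ρ, hρ, rfl⟩ | ⟨b', rfl⟩ | ⟨ρ, hρ, b', rfl⟩
  · exact absurd (hsub (mem_insert_self _ _)) inr_not_mem_image_inl
  · obtain ⟨a, ha⟩ := K.nonempty_of_mem τ hτ.1
    have : (Sum.inl a : V ⊕ Bool) ∈ ({Sum.inr b'} : Finset (V ⊕ Bool)) :=
      hsub (mem_insert_of_mem (mem_image_of_mem _ ha))
    simp at this
  · have hb : b = b' := by
      have := hsub (mem_insert_self _ _)
      rcases mem_insert.mp this with hh | hh
      · exact Sum.inr.inj hh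
      · exact absurd hh inr_not_mem_image_inl
    subst hb
    have hsub2 : τ ⊆ ρ := by
      intro a ha
      have := hsub (mem_insert_of_mem (mem_image_of_mem _ ha))
      rcases mem_insert.mp this with hh | hh
      · simp at hh
      · simpa using hh
    rw [hτ.2 ρ hρ hsub2]

theorem Susp.max_shape (h : Susp K J) {σ : Finset (V ⊕ Bool)} (hσ : J.IsMaximal σ)
    (hv : Sum.inl v ∈ σ) :
    ∃ τ b, K.IsMaximal τ ∧ v ∈ τ ∧ σ = insert (Sum.inr b) (τ.image Sum.inl) := by
  rcases (h _).mp hσ.1 with ⟨τ, hτ, rfl⟩ | ⟨b', rfl⟩ | ⟨τ, hτ, b', rfl⟩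
  · exfalso
    have hmem : insert (Sum.inr true) (τ.image Sum.inl) ∈ J.faces := h.insert_mem hτ true
    have := hσ.2 _ hmem (subset_insert _ _)
    exact inr_not_mem_image_inl (this ▸ mem_insert_self (Sum.inr true) _)
  · simp at hv
  · have hvτ : v ∈ τ := by
      rcases mem_insert.mp hv with hh | hh
      · simp at hh
      · simpa using hh
    refine ⟨τ, b', ⟨hτ, fun ρ hρ hsub => ?_⟩, hvτ, rfl⟩
    have := hσ.2 _ (h.insert_mem hρ b')
      (insert_subset_insert _ (image_subset_image hsub))
    exact insert_inr_inj this

theorem Susp.dom (h : Susp K J) (hd : K.Dominated v w) :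
    J.Dominated (Sum.inl v) (Sum.inl w) := by
  refine ⟨by simp [hd.1], ?_, ?_, fun σ hσ hv => ?_⟩
  · have : ({v} : Finset V).image Sum.inl ∈ J.faces := (h _).mpr (Or.inl ⟨{v}, hd.2.1, rfl⟩)
    simpa [SC.IsVertex] using this
  · have : ({w} : Finset V).image Sum.inl ∈ J.faces := (h _).mpr (Or.inl ⟨{w}, hd.2.2.1, rfl⟩)
    simpa [SC.IsVertex] using this
  · obtain ⟨τ, b, hτ, hvτ, rfl⟩ := h.max_shape hσ hv
    exact mem_insert_of_mem (mem_image_of_mem _ (hd.2.2.2 τ hτ hvτ))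

theorem Susp.delete (h : Susp K J) (v : V) : Susp (K.delete v) (J.delete (Sum.inl v)) := by
  intro σ
  rw [SC.mem_delete, h σ]
  simp only [SC.mem_delete]
  constructor
  · rintro ⟨⟨τ, hτ, rfl⟩ | ⟨b, rfl⟩ | ⟨τ, hτ, b, rfl⟩, hniv⟩
    · exact Or.inl ⟨τ, ⟨hτ, fun hh => hniv (by simpa using hh)⟩, rfl⟩
    · exact Or.inr (Or.inl ⟨b, rfl⟩)
    · refine Or.inr (Or.inr ⟨τ, ⟨hτ, fun hh => hniv ?_⟩, b, rfl⟩)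
      exact mem_insert_of_mem (by simpa using hh)
  · rintro (⟨τ, hτ, rfl⟩ | ⟨b, rfl⟩ | ⟨τ, hτ, b, rfl⟩)
    · exact ⟨Or.inl ⟨τ, hτ.1, rfl⟩, fun hh => hτ.2 (by simpa using hh)⟩
    · exact ⟨Or.inr (Or.inl ⟨b, rfl⟩), by simp⟩
    · refine ⟨Or.inr (Or.inr ⟨τ, hτ.1, b, rfl⟩), fun hh => ?_⟩
      rcases mem_insert.mp hh with hh | hh
      · simp at hh
      · exact hτ.2 (by simpa using hh)

theorem Susp.collapses (h : Susp K J) (hc : Collapses K L) :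
    ∃ J', Collapses J J' ∧ Susp L J' := by
  induction hc with
  | refl => exact ⟨J, Relation.ReflTransGen.refl, h⟩
  | tail _ hstep ih =>
    obtain ⟨J', hcJ, hS⟩ := ih
    obtain ⟨v, w, hd, rfl⟩ := hstep
    exact ⟨J'.delete (Sum.inl v), hcJ.tail ⟨Sum.inl v, Sum.inl w, hS.dom hd, rfl⟩, hS.delete v⟩

end Susp
section Endgame
variable {K L : SC V} {J : SC (V ⊕ Bool)} {τ ρ : Finset V} {v w v₀ : V} {b : Bool}

theorem susp_point_strcol (h : Susp K J) (hK : K.faces = {({v₀} : Finset V)}) :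
    StronglyCollapsible J := by
  have hv₀K : ({v₀} : Finset V) ∈ K.faces := by rw [hK]; simp
  have hbig : ∀ b : Bool, ({Sum.inr b, Sum.inl v₀} : Finset (V ⊕ Bool)) ∈ J.faces := by
    intro b
    have := h.insert_mem hv₀K b
    simpa using this
  have hvJ : ({Sum.inl v₀} : Finset (V ⊕ Bool)) ∈ J.faces := by
    have : ({v₀} : Finset V).image Sum.inl ∈ J.faces := (h _).mpr (Or.inl ⟨{v₀}, hv₀K, rfl⟩)
    simpa using this
  -- step 1 : inr true is dominated by inl v₀ in J
  have hdom1 : J.Dominated (Sum.inr true) (Sum.inl v₀) := by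
    refine ⟨by simp, (h _).mpr (Or.inr (Or.inl ⟨true, rfl⟩)), hvJ, fun σ hσ hmem => ?_⟩
    rcases (h _).mp hσ.1 with ⟨τ, hτ, rfl⟩ | ⟨b, rfl⟩ | ⟨τ, hτ, b, rfl⟩
    · exact absurd hmem inr_not_mem_image_inl
    · exfalso
      have hb : b = true := by simpa using (mem_singleton.mp hmem).symm
      subst hb
      have := hσ.2 _ (hbig true) (by simp)
      have : (Sum.inl v₀ : V ⊕ Bool) ∈ ({Sum.inr true} : Finset (V ⊕ Bool)) := by
        rw [this]; simp
      simp at this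
    · rw [hK, mem_singleton] at hτ
      subst hτ
      simp
  set J₂ := J.delete (Sum.inr true) with hJ₂
  have hmem₂ : ∀ σ, σ ∈ J₂.faces ↔ σ ∈ J.faces ∧ (Sum.inr true : V ⊕ Bool) ∉ σ :=
    fun σ => SC.mem_delete
  have hbig₂ : ({Sum.inr false, Sum.inl v₀} : Finset (V ⊕ Bool)) ∈ J₂.faces := by
    rw [hmem₂]
    exact ⟨hbig false, by simp⟩
  have hdom2 : J₂.Dominated (Sum.inr false) (Sum.inl v₀) := by
    refine ⟨by simp, ?_, ?_, fun σ hσ hmem => ?_⟩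
    · exact (hmem₂ _).mpr ⟨(h _).mpr (Or.inr (Or.inl ⟨false, rfl⟩)), by simp⟩
    · exact (hmem₂ _).mpr ⟨hvJ, by simp⟩
    · have hσJ := (hmem₂ _).mp hσ.1
      rcases (h _).mp hσJ.1 with ⟨τ, hτ, rfl⟩ | ⟨b, rfl⟩ | ⟨τ, hτ, b, rfl⟩
      · exact absurd hmem inr_not_mem_image_inl
      · exfalso
        have hb : b = false := by simpa using (mem_singleton.mp hmem).symm
        subst hb
        have := hσ.2 _ hbig₂ (by simp)
        have : (Sum.inl v₀ : V ⊕ Bool) ∈ ({Sum.inr false} : Finset (V ⊕ Bool)) := by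
          rw [this]; simp
        simp at this
      · rw [hK, mem_singleton] at hτ
        subst hτ
        simp
  set J₃ := J₂.delete (Sum.inr false) with hJ₃
  have hJ₃faces : J₃.faces = {({Sum.inl v₀} : Finset (V ⊕ Bool))} := by
    ext σ
    rw [mem_singleton]
    rw [show J₃ = J₂.delete (Sum.inr false) from rfl, SC.mem_delete, hmem₂]
    constructor
    · rintro ⟨⟨hσJ, hnt⟩, hnf⟩
      rcases (h _).mp hσJ with ⟨τ, hτ, rfl⟩ | ⟨b, rfl⟩ | ⟨τ, hτ, b, rfl⟩
      · rw [hK, mem_singleton] at hτ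
        subst hτ
        simp
      · cases b
        · simp at hnf
        · simp at hnt
      · exfalso
        cases b
        · exact hnf (mem_insert_self _ _)
        · exact hnt (mem_insert_self _ _)
    · rintro rfl
      exact ⟨⟨hvJ, by simp⟩, by simp⟩
  refine ⟨J₃, Sum.inl v₀, ?_, hJ₃faces⟩
  exact (Relation.ReflTransGen.single ⟨_, _, hdom1, rfl⟩).tail ⟨_, _, hdom2, rfl⟩

theorem second_vertex (hw : ({w} : Finset V) ∈ K.faces)
    (hnp : K.faces ≠ {({w} : Finset V)}) : ∃ v, ({v} : Finset V) ∈ K.faces ∧ v ≠ w := by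
  by_contra hcon
  push_neg at hcon
  apply hnp
  ext σ
  rw [mem_singleton]
  constructor
  · intro hσ
    have hsub : σ ⊆ {w} := by
      intro a ha
      have : ({a} : Finset V) ∈ K.faces :=
        K.down_closed σ hσ {a} (singleton_subset_iff.mpr ha) (singleton_nonempty a)
      rw [mem_singleton, hcon a this]
    obtain ⟨a, ha⟩ := K.nonempty_of_mem σ hσ
    have haw : a = w := mem_singleton.mp (hsub ha)
    apply Finset.Subset.antisymm hsub
    rw [← haw]
    exact singleton_subset_iff.mpr ha
  · rintro rfl; exact hw

theorem Susp.minimal (h : Susp K J) (hmin : K.Minimal)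
    (hnp : ∀ v, K.faces ≠ {({v} : Finset V)}) : J.Minimal := by
  rintro p q hd
  obtain ⟨v⟩ | ⟨b⟩ := p
  · -- p = inl v
    have hv : ({v} : Finset V) ∈ K.faces := h.vertex_inl hd.2.1
    obtain ⟨w⟩ | ⟨b⟩ := q
    · -- q = inl w
      refine hmin v w ⟨by simpa using hd.1, hv, h.vertex_inl hd.2.2.1, fun σ hσ hvσ => ?_⟩
      have hmax := h.max_insert hσ true
      have := hd.2.2.2 _ hmax (mem_insert_of_mem (by simpa using hvσ))
      rcases mem_insert.mp this with hh | hh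
      · simp at hh
      · simpa using hh
    · -- q = inr b
      obtain ⟨τ, hτ, hsub⟩ := K.exists_maximal_supset hv
      have hmax := h.max_insert hτ (!b)
      have := hd.2.2.2 _ hmax
        (mem_insert_of_mem (mem_image_of_mem _ (hsub (mem_singleton_self v))))
      rcases mem_insert.mp this with hh | hh
      · exfalso
        have : b = !b := Sum.inr.inj hh
        simp at this
      · exact inr_not_mem_image_inl hh
  · -- p = inr b
    obtain ⟨w⟩ | ⟨b'⟩ := q
    · -- q = inl w : every maximal simplex contains inl w
      have hw : ({w} : Finset V) ∈ K.faces := h.vertex_inl hd.2.2.1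
      obtain ⟨v, hv, hvw⟩ := second_vertex hw (hnp w)
      refine hmin v w ⟨hvw, hv, hw, fun σ hσ hvσ => ?_⟩
      have hmax := h.max_insert hσ b
      have := hd.2.2.2 _ hmax (mem_insert_self _ _)
      rcases mem_insert.mp this with hh | hh
      · simp at hh
      · simpa using hh
    · -- q = inr b'
      have hbb : b ≠ b' := by simpa using hd.1
      obtain ⟨σ, hσ, hsub⟩ := J.exists_maximal_supset hd.2.1
      have hbσ : (Sum.inr b : V ⊕ Bool) ∈ σ := hsub (mem_singleton_self _)
      have hb'σ := hd.2.2.2 _ hσ hbσ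
      rcases (h _).mp hσ.1 with ⟨τ, hτ, rfl⟩ | ⟨c, rfl⟩ | ⟨τ, hτ, c, rfl⟩
      · exact inr_not_mem_image_inl hbσ
      · apply hbb
        have h1 : b = c := Sum.inr.inj (mem_singleton.mp hbσ)
        have h2 : b' = c := Sum.inr.inj (mem_singleton.mp hb'σ)
        rw [h1, h2]
      · apply hbb
        have h1 : b = c := by
          rcases mem_insert.mp hbσ with hh | hh
          · exact Sum.inr.inj hh
          · exact absurd hh inr_not_mem_image_inl
        have h2 : b' = c := by
          rcases mem_insert.mp hb'σ with hh | hh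
          · exact Sum.inr.inj hh
          · exact absurd hh inr_not_mem_image_inl
        rw [h1, h2]

end Endgame
theorem stmt11 (K : SC V) (J : SC (V ⊕ Bool))
    (hJ : ∀ σ : Finset (V ⊕ Bool), σ ∈ J.faces ↔
      ((∃ τ ∈ K.faces, σ = τ.image Sum.inl) ∨
        (∃ b : Bool, σ = {(Sum.inr b : V ⊕ Bool)}) ∨
        ∃ τ ∈ K.faces, ∃ b : Bool, σ = insert (Sum.inr b) (τ.image Sum.inl))) :
    StronglyCollapsible J ↔ StronglyCollapsible K := by
  have hS : Susp K J := hJ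
  constructor
  · intro hJs
    obtain ⟨M, hKM, hMmin⟩ := exists_core K
    obtain ⟨J', hJJ', hS'⟩ := hS.collapses hKM
    have hJ's : StronglyCollapsible J' := collapses_preserves hJs hJJ'
    by_cases hp : ∃ v, M.faces = {({v} : Finset V)}
    · obtain ⟨v, hv⟩ := hp
      exact ⟨M, v, hKM, hv⟩
    · push_neg at hp
      have hJ'min : J'.Minimal := hS'.minimal hMmin hp
      obtain ⟨y, hy⟩ := minimal_strcol hJ'min hJ's
      have h1 : ({Sum.inr true} : Finset (V ⊕ Bool)) ∈ J'.faces :=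
        (hS' _).mpr (Or.inr (Or.inl ⟨true, rfl⟩))
      have h2 : ({Sum.inr false} : Finset (V ⊕ Bool)) ∈ J'.faces :=
        (hS' _).mpr (Or.inr (Or.inl ⟨false, rfl⟩))
      rw [hy, mem_singleton] at h1 h2
      have : (Sum.inr true : V ⊕ Bool) = Sum.inr false :=
        Finset.singleton_injective (h1.trans h2.symm)
      simp at this
  · intro hKs
    obtain ⟨L, v₀, hc, hL⟩ := hKs
    obtain ⟨J', hJJ', hS'⟩ := hS.collapses hc
    obtain ⟨L', y, hc', hL'⟩ := susp_point_strcol hS' hL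
    exact ⟨L', y, hJJ'.trans hc', hL'⟩
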